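/- arXiv:2110.14134 — 2 statements merged into one kernel-verified Lean document; each statement's English description precedes it below -/
import Mathlib

section
/- For i = 1,2,3 let A_i, B_i, C_i be qubit observables with Bloch vectors a_i, b_i, c_i ∈ ℝ³, and assume each of the triples {a₁,a₂,a₃}, {b₁,b₂,b₃}, {c₁,c₂,c₃} is linearly independent. Define the 8×8 Hermitian matrices M_i = A_i ⊗ I ⊗ I + I ⊗ B_i ⊗ I + I ⊗ I ⊗ C_i (Kronecker products, I the 2×2 identity). If ρ is a fully separable tripartite density matrix, i.e. ρ = Σ_k p_k · ρ_{k,A} ⊗ ρ_{k,B} ⊗ ρ_{k,C} is a finite convex combination (p_k ≥ 0, Σ_k p_k = 1) of Kronecker products of qubit density matrices, then Σ_{i=1}^{3} (Δ_ρM_i)² ≥ (Tr(T_{a₁,a₂,a₃}) − λ_max(T_{a₁,a₂,a₃})) + (Tr(T_{b₁,b₂,b₃}) − λ_max(T_{b₁,b₂,b₃})) + (Tr(T_{c₁,c₂,c₃}) − λ_max(T_{c₁,c₂,c₃})). -/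
open Matrix MeasureTheory Filter Set
open scoped RealInnerProductSpace Kronecker ComplexOrder

noncomputable section

/-- ℝ³ with the Euclidean norm and inner product. -/
abbrev E3 : Type := EuclideanSpace ℝ (Fin 3)

/-- The Pauli matrices. -/
def pauli1 : Matrix (Fin 2) (Fin 2) ℂ := !![0, 1; 1, 0]
def pauli2 : Matrix (Fin 2) (Fin 2) ℂ := !![0, -Complex.I; Complex.I, 0]
def pauli3 : Matrix (Fin 2) (Fin 2) ℂ := !![1, 0; 0, -1]

/-- The qubit observable `a₀·I + a·σ`. -/
def qObs (a0 : ℝ) (a : E3) : Matrix (Fin 2) (Fin 2) ℂ :=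
  (a0 : ℂ) • (1 : Matrix (Fin 2) (Fin 2) ℂ)
    + (a 0 : ℂ) • pauli1 + (a 1 : ℂ) • pauli2 + (a 2 : ℂ) • pauli3

/-- A density matrix: positive semidefinite with trace one. -/
def IsDensityMatrix {n : Type*} [Fintype n] (ρ : Matrix n n ℂ) : Prop :=
  ρ.PosSemidef ∧ ρ.trace = 1

/-- Mean value `⟨M⟩_ρ = Tr(Mρ)` of an observable `M` in the state `ρ`. -/
def mean {n : Type*} [Fintype n] (M ρ : Matrix n n ℂ) : ℝ :=
  (Matrix.trace (M * ρ)).re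

/-- Variance `(Δ_ρ M)² = Tr(M²ρ) − (Tr(Mρ))²`. -/
def variance {n : Type*} [Fintype n] (M ρ : Matrix n n ℂ) : ℝ :=
  (Matrix.trace (M * M * ρ)).re - (mean M ρ) ^ 2

/-- Uncertainty `Δ_ρ M` (standard deviation). -/
def uncertainty {n : Type*} [Fintype n] (M ρ : Matrix n n ℂ) : ℝ :=
  Real.sqrt (variance M ρ)

/-- Gram matrix of a tuple of vectors in ℝ³. -/
def gram {m : ℕ} (v : Fin m → E3) : Matrix (Fin m) (Fin m) ℝ :=
  Matrix.of fun i j => (inner ℝ (v i) (v j) : ℝ)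

lemma gram_isHermitian {m : ℕ} (v : Fin m → E3) : (gram v).IsHermitian := by
  ext i j
  simp [_root_.gram, Matrix.conjTranspose_apply, mul_comm, real_inner_comm]

/-- Smallest eigenvalue of the Gram matrix. -/
def lamMin {m : ℕ} (v : Fin m → E3) : ℝ := ⨅ i, (gram_isHermitian v).eigenvalues i

/-- Largest eigenvalue of the Gram matrix. -/
def lamMax {m : ℕ} (v : Fin m → E3) : ℝ := ⨆ i, (gram_isHermitian v).eigenvalues i

/-- The tripartite observable A ⊗ I ⊗ I + I ⊗ B ⊗ I + I ⊗ I ⊗ C. -/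
def obs3 (A B C : Matrix (Fin 2) (Fin 2) ℂ) :
    Matrix ((Fin 2 × Fin 2) × Fin 2) ((Fin 2 × Fin 2) × Fin 2) ℂ :=
  A ⊗ₖ (1 : Matrix (Fin 2) (Fin 2) ℂ) ⊗ₖ (1 : Matrix (Fin 2) (Fin 2) ℂ)
    + (1 : Matrix (Fin 2) (Fin 2) ℂ) ⊗ₖ B ⊗ₖ (1 : Matrix (Fin 2) (Fin 2) ℂ)
    + (1 : Matrix (Fin 2) (Fin 2) ℂ) ⊗ₖ (1 : Matrix (Fin 2) (Fin 2) ℂ) ⊗ₖ C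
lemma qObs_eq (a0 : ℝ) (a : E3) :
    qObs a0 a = !![(a0 : ℂ) + a 2, (a 0 : ℂ) - Complex.I * a 1;
                   (a 0 : ℂ) + Complex.I * a 1, (a0 : ℂ) - a 2] := by
  ext i j
  fin_cases i <;> fin_cases j <;>
    simp [qObs, pauli1, pauli2, pauli3, Matrix.one_apply] <;> ring

lemma qObs_sq (a0 : ℝ) (a : E3) :
    qObs a0 a * qObs a0 a
      = qObs (a0 ^ 2 + ((a 0) ^ 2 + (a 1) ^ 2 + (a 2) ^ 2)) ((2 * a0) • a) := by
  rw [qObs_eq, qObs_eq]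
  have h0 : ((2 * a0) • a) 0 = 2 * a0 * a 0 := rfl
  have h1 : ((2 * a0) • a) 1 = 2 * a0 * a 1 := rfl
  have h2 : ((2 * a0) • a) 2 = 2 * a0 * a 2 := rfl
  ext i j
  fin_cases i <;> fin_cases j <;>
    simp [Matrix.mul_apply, Fin.sum_univ_two, h0, h1, h2] <;>
    push_cast <;> ring_nf <;> simp [Complex.ext_iff] <;> ring_nf <;> norm_num

lemma trace_qObs_mul (a0 : ℝ) (v : E3) (ρ : Matrix (Fin 2) (Fin 2) ℂ)
    (h10 : ρ 1 0 = star (ρ 0 1)) (h00 : (ρ 0 0).im = 0) (h11 : (ρ 1 1).im = 0) :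
    (Matrix.trace (qObs a0 v * ρ)).re
      = a0 * ((ρ 0 0).re + (ρ 1 1).re)
        + (v 0 * (2 * (ρ 0 1).re) + v 1 * (-(2 * (ρ 0 1).im))
          + v 2 * ((ρ 0 0).re - (ρ 1 1).re)) := by
  rw [qObs_eq]
  simp [Matrix.trace_fin_two, Matrix.mul_apply, Matrix.vecMul, dotProduct, Fin.sum_univ_two, h10, Matrix.vecHead, Matrix.vecTail,
    Complex.add_re, Complex.mul_re, Complex.sub_re, h00, h11]
  ring

lemma variance_qObs (a0 : ℝ) (v : E3) (ρ : Matrix (Fin 2) (Fin 2) ℂ)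
    (hH : ρ.IsHermitian) (htr : ρ.trace = 1) :
    variance (qObs a0 v) ρ
      = ((v 0) ^ 2 + (v 1) ^ 2 + (v 2) ^ 2)
        - (v 0 * (2 * (ρ 0 1).re) + v 1 * (-(2 * (ρ 0 1).im))
            + v 2 * ((ρ 0 0).re - (ρ 1 1).re)) ^ 2 := by
  have h10 : ρ 1 0 = star (ρ 0 1) := by
    rw [← hH.apply 1 0]
  have h00 : (ρ 0 0).im = 0 := by
    have h := congrArg Complex.im (hH.apply 0 0)
    simp [Complex.conj_im] at h; linarith
  have h11 : (ρ 1 1).im = 0 := by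
    have h := congrArg Complex.im (hH.apply 1 1)
    simp [Complex.conj_im] at h; linarith
  have hPQ : (ρ 0 0).re + (ρ 1 1).re = 1 := by
    have := congrArg Complex.re htr
    simpa [Matrix.trace_fin_two, Complex.add_re] using this
  have h0 : ((2 * a0) • v) 0 = 2 * a0 * v 0 := rfl
  have h1 : ((2 * a0) • v) 1 = 2 * a0 * v 1 := rfl
  have h2 : ((2 * a0) • v) 2 = 2 * a0 * v 2 := rfl
  rw [variance, mean, qObs_sq, trace_qObs_mul _ _ _ h10 h00 h11,
    trace_qObs_mul _ _ _ h10 h00 h11, h0, h1, h2]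
  have hQ : (ρ 1 1).re = 1 - (ρ 0 0).re := by linarith
  rw [hQ]; ring

lemma bloch_norm_le (ρ : Matrix (Fin 2) (Fin 2) ℂ)
    (hρ : ρ.PosSemidef) (htr : ρ.trace = 1) :
    (2 * (ρ 0 1).re) ^ 2 + (-(2 * (ρ 0 1).im)) ^ 2
      + ((ρ 0 0).re - (ρ 1 1).re) ^ 2 ≤ 1 := by
  have hH := hρ.1
  have h10 : ρ 1 0 = star (ρ 0 1) := by rw [← hH.apply 1 0]
  have h00 : (ρ 0 0).im = 0 := by
    have h := congrArg Complex.im (hH.apply 0 0)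
    simp [Complex.conj_im] at h; linarith
  have h11 : (ρ 1 1).im = 0 := by
    have h := congrArg Complex.im (hH.apply 1 1)
    simp [Complex.conj_im] at h; linarith
  have hPQ : (ρ 0 0).re + (ρ 1 1).re = 1 := by
    have := congrArg Complex.re htr
    simpa [Matrix.trace_fin_two, Complex.add_re] using this
  have hdet : ρ.det = ((hH.eigenvalues 0 * hH.eigenvalues 1 : ℝ) : ℂ) := by
    rw [hH.det_eq_prod_eigenvalues, Fin.prod_univ_two]; push_cast; rfl
  have hdre : 0 ≤ (ρ.det).re := by
    rw [hdet, Complex.ofReal_re]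
    exact mul_nonneg (hρ.eigenvalues_nonneg 0) (hρ.eigenvalues_nonneg 1)
  have hdc : (ρ.det).re
      = (ρ 0 0).re * (ρ 1 1).re - ((ρ 0 1).re ^ 2 + (ρ 0 1).im ^ 2) := by
    rw [Matrix.det_fin_two, h10]
    simp [Complex.sub_re, Complex.mul_re, h00, h11, Complex.conj_re, Complex.conj_im]
    ring
  nlinarith [hdre, hdc, hPQ]

lemma dot_gram {m : ℕ} (v : Fin m → E3) (x : Fin m → ℝ) :
    x ⬝ᵥ (gram v *ᵥ x) = ⟪(∑ i, x i • v i), (∑ i, x i • v i)⟫ := by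
  rw [sum_inner]
  simp only [inner_sum, real_inner_smul_left, real_inner_smul_right,
    dotProduct, Matrix.mulVec, _root_.gram, Matrix.of_apply, Finset.mul_sum]
  congr 1; ext i; congr 1; ext j; ring

lemma gram_posSemidef {m : ℕ} (v : Fin m → E3) : (gram v).PosSemidef := by
  refine Matrix.PosSemidef.of_dotProduct_mulVec_nonneg (gram_isHermitian v) fun x => ?_
  rw [star_trivial, dot_gram]
  exact real_inner_self_nonneg

lemma eig_le_lamMax {m : ℕ} (v : Fin m → E3) (i : Fin m) :
    (gram_isHermitian v).eigenvalues i ≤ lamMax v :=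
  le_ciSup (Set.Finite.bddAbove (Set.finite_range _)) i

lemma lamMax_nonneg (v : Fin 3 → E3) : 0 ≤ lamMax v :=
  le_trans ((gram_posSemidef v).eigenvalues_nonneg 0) (eig_le_lamMax v 0)

lemma quad_le (v : Fin 3 → E3) (x : EuclideanSpace ℝ (Fin 3)) :
    x ⬝ᵥ (gram v *ᵥ x) ≤ lamMax v * (x ⬝ᵥ x) := by
  set T := gram v with hT
  have hH := gram_isHermitian v
  set B := hH.eigenvectorBasis with hB
  set c : Fin 3 → ℝ := fun j => B.repr x j with hc
  have hdot : ∀ y z : EuclideanSpace ℝ (Fin 3), y ⬝ᵥ z = ⟪y, z⟫ := by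
    intro y z
    simp [PiLp.inner_apply, dotProduct, RCLike.inner_apply, mul_comm]
  have hxe : x = ∑ j, c j • B j := (B.sum_repr x).symm
  have hmul : T *ᵥ x = ∑ j, (c j * hH.eigenvalues j) • (B j : EuclideanSpace ℝ (Fin 3)) := by
    calc T *ᵥ x = T.mulVecLin x := rfl
    _ = ∑ j, c j • T.mulVecLin (B j) := by
        conv_lhs => rw [hxe]
        rw [WithLp.ofLp_sum, map_sum]
        exact Finset.sum_congr rfl fun j _ => by rw [WithLp.ofLp_smul]; exact T.mulVecLin.map_smul _ _
    _ = ∑ j, (c j * hH.eigenvalues j) • (B j : EuclideanSpace ℝ (Fin 3)) := by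
        rw [WithLp.ofLp_sum]
        refine Finset.sum_congr rfl fun j _ => ?_
        have h := hH.mulVec_eigenvectorBasis j
        calc c j • T.mulVecLin (B j)
            = c j • (hH.eigenvalues j • (B j : EuclideanSpace ℝ (Fin 3))) := by
              rw [Matrix.mulVecLin_apply]; exact congrArg (c j • ·) h
        _ = (c j * hH.eigenvalues j) • (B j : EuclideanSpace ℝ (Fin 3)) := by
              rw [smul_smul]
  have hinner : x ⬝ᵥ (T *ᵥ x) = ∑ j, hH.eigenvalues j * (c j) ^ 2 := by
    rw [hmul]
    have : (x ⬝ᵥ (∑ j, (c j * hH.eigenvalues j) • (B j : EuclideanSpace ℝ (Fin 3)) : EuclideanSpace ℝ (Fin 3)))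
        = ⟪x, ∑ j, (c j * hH.eigenvalues j) • (B j : EuclideanSpace ℝ (Fin 3))⟫ := hdot _ _
    rw [this, inner_sum]
    refine Finset.sum_congr rfl fun j _ => ?_
    rw [real_inner_smul_right]
    have : ⟪x, (B j : EuclideanSpace ℝ (Fin 3))⟫ = c j := by
      rw [real_inner_comm, ← B.repr_apply_apply]
    rw [this]; ring
  have hxx : x ⬝ᵥ x = ∑ j, (c j) ^ 2 := by
    have hpars := B.sum_inner_mul_inner x x
    rw [hdot x x, ← hpars]
    refine Finset.sum_congr rfl fun j _ => ?_
    have hcx : (inner ℝ x (B j) : ℝ) = c j := by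
      rw [real_inner_comm]; exact (B.repr_apply_apply x j).symm
    have hcx2 : (inner ℝ (B j) x : ℝ) = c j := (B.repr_apply_apply x j).symm
    rw [hcx, hcx2]; ring
  rw [hinner, hxx, Finset.mul_sum]
  refine Finset.sum_le_sum fun j _ => ?_
  exact mul_le_mul_of_nonneg_right (eig_le_lamMax v j) (sq_nonneg _)

lemma sum_inner_sq_le (v : Fin 3 → E3) (n : E3) (hn : ⟪n, n⟫ ≤ 1) :
    ∑ i, (⟪v i, n⟫ : ℝ) ^ 2 ≤ lamMax v := by
  set x : EuclideanSpace ℝ (Fin 3) := WithLp.toLp 2 (fun i => (⟪v i, n⟫ : ℝ)) with hx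
  set w : E3 := ∑ i, x i • v i with hwdef
  set S : ℝ := ∑ i, (x i) ^ 2 with hS
  have hwn : ⟪w, n⟫ = S := by
    rw [hwdef, sum_inner, hS]
    refine Finset.sum_congr rfl fun i _ => ?_
    rw [real_inner_smul_left, hx, sq]
  have hww : ⟪w, w⟫ = x ⬝ᵥ (gram v *ᵥ x) := (dot_gram v x).symm
  have hxx : (x ⬝ᵥ x : ℝ) = S := by
    simp [dotProduct, hS, sq]
  have h1 : S ^ 2 ≤ ⟪w, w⟫ * ⟪n, n⟫ := by
    rw [← hwn, sq]; exact real_inner_mul_inner_self_le w n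
  have h2 : ⟪w, w⟫ ≤ lamMax v * S := by
    rw [hww, ← hxx]; exact quad_le v x
  have hSn : 0 ≤ S := Finset.sum_nonneg fun i _ => sq_nonneg _
  have hwwn : (0:ℝ) ≤ ⟪w, w⟫ := real_inner_self_nonneg
  have hnn : (0:ℝ) ≤ ⟪n, n⟫ := real_inner_self_nonneg
  have hL := lamMax_nonneg v
  nlinarith [h1, h2, hSn, hwwn, hnn, hL, mul_nonneg hL hSn]

lemma qubit_three_var (v0 : Fin 3 → ℝ) (v : Fin 3 → E3)
    (ρ : Matrix (Fin 2) (Fin 2) ℂ) (hρ : ρ.PosSemidef) (htr : ρ.trace = 1) :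
    (gram v).trace - lamMax v ≤ ∑ i : Fin 3, variance (qObs (v0 i) (v i)) ρ := by
  set n : E3 := (WithLp.equiv 2 (Fin 3 → ℝ)).symm
    ![2 * (ρ 0 1).re, -(2 * (ρ 0 1).im), (ρ 0 0).re - (ρ 1 1).re] with hndef
  have hn0 : n 0 = 2 * (ρ 0 1).re := rfl
  have hn1 : n 1 = -(2 * (ρ 0 1).im) := rfl
  have hn2 : n 2 = (ρ 0 0).re - (ρ 1 1).re := rfl
  have hinner : ∀ u : E3, (⟪u, n⟫ : ℝ)
      = u 0 * (2 * (ρ 0 1).re) + u 1 * (-(2 * (ρ 0 1).im))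
        + u 2 * ((ρ 0 0).re - (ρ 1 1).re) := by
    intro u
    simp [PiLp.inner_apply, RCLike.inner_apply, Fin.sum_univ_three, hn0, hn1, hn2]; ring
  have hself : ∀ u : E3, (⟪u, u⟫ : ℝ) = u 0 ^ 2 + u 1 ^ 2 + u 2 ^ 2 := by
    intro u
    rw [PiLp.inner_apply]
    simp [RCLike.inner_apply, Fin.sum_univ_three, sq]
  have hvar : ∀ i, variance (qObs (v0 i) (v i)) ρ = ⟪v i, v i⟫ - ⟪v i, n⟫ ^ 2 := by
    intro i
    rw [variance_qObs _ _ _ hρ.1 htr, hinner, hself]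
  have hnn : (⟪n, n⟫ : ℝ) ≤ 1 := by
    have hb := bloch_norm_le ρ hρ htr
    rw [hself, hn0, hn1, hn2]
    linarith [hb]
  have hlam := sum_inner_sq_le v n hnn
  have htrg : (gram v).trace = ∑ i, (⟪v i, v i⟫ : ℝ) := by
    simp [Matrix.trace, Matrix.diag, _root_.gram]
  calc (gram v).trace - lamMax v
      ≤ ∑ i, (⟪v i, v i⟫ : ℝ) - ∑ i, (⟪v i, n⟫ : ℝ) ^ 2 := by
        rw [htrg]; linarith [hlam]
    _ = ∑ i : Fin 3, variance (qObs (v0 i) (v i)) ρ := by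
        rw [← Finset.sum_sub_distrib]
        exact Finset.sum_congr rfl fun i _ => (hvar i).symm

lemma trace_mul_real {n : Type*} [Fintype n] (A ρ : Matrix n n ℂ)
    (hA : A.IsHermitian) (hρ : ρ.IsHermitian) :
    Matrix.trace (A * ρ) = (((Matrix.trace (A * ρ)).re : ℝ) : ℂ) := by
  have hst : (starRingEnd ℂ) (Matrix.trace (A * ρ)) = Matrix.trace (A * ρ) := by
    calc (starRingEnd ℂ) (Matrix.trace (A * ρ))
        = Matrix.trace ((A * ρ)ᴴ) := (Matrix.trace_conjTranspose (A * ρ)).symm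
      _ = Matrix.trace (ρᴴ * Aᴴ) := by rw [Matrix.conjTranspose_mul]
      _ = Matrix.trace (ρ * A) := by rw [hρ, hA]
      _ = Matrix.trace (A * ρ) := Matrix.trace_mul_comm _ _
  exact (Complex.conj_eq_iff_re.mp hst).symm

lemma qObs_isHermitian (a0 : ℝ) (a : E3) : (qObs a0 a).IsHermitian := by
  rw [qObs_eq]
  ext i j
  fin_cases i <;> fin_cases j <;>
    simp [Matrix.conjTranspose_apply, Complex.ext_iff]

lemma variance_obs3 (A B C ρ1 ρ2 ρ3 : Matrix (Fin 2) (Fin 2) ℂ)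
    (hA : A.IsHermitian) (hB : B.IsHermitian) (hC : C.IsHermitian)
    (h1 : ρ1.IsHermitian) (h2 : ρ2.IsHermitian) (h3 : ρ3.IsHermitian)
    (t1 : ρ1.trace = 1) (t2 : ρ2.trace = 1) (t3 : ρ3.trace = 1) :
    variance (obs3 A B C) (ρ1 ⊗ₖ ρ2 ⊗ₖ ρ3)
      = variance A ρ1 + variance B ρ2 + variance C ρ3 := by
  set a := mean A ρ1 with ha
  set b := mean B ρ2 with hb
  set c := mean C ρ3 with hc
  have rA : Matrix.trace (A * ρ1) = ((a : ℝ) : ℂ) := trace_mul_real A ρ1 hA h1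
  have rB : Matrix.trace (B * ρ2) = ((b : ℝ) : ℂ) := trace_mul_real B ρ2 hB h2
  have rC : Matrix.trace (C * ρ3) = ((c : ℝ) : ℂ) := trace_mul_real C ρ3 hC h3
  have hM1 : Matrix.trace (obs3 A B C * (ρ1 ⊗ₖ ρ2 ⊗ₖ ρ3))
      = ((a + b + c : ℝ) : ℂ) := by
    simp only [obs3, add_mul, Matrix.trace_add, ← Matrix.mul_kronecker_mul,
      Matrix.trace_kronecker, Matrix.one_mul, Matrix.mul_one, t1, t2, t3,
      mul_one, one_mul, rA, rB, rC]
    push_cast; ring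
  have hM2 : Matrix.trace (obs3 A B C * obs3 A B C * (ρ1 ⊗ₖ ρ2 ⊗ₖ ρ3))
      = Matrix.trace (A * A * ρ1) + Matrix.trace (B * B * ρ2)
        + Matrix.trace (C * C * ρ3)
        + 2 * (((a * b + a * c + b * c : ℝ) : ℂ)) := by
    simp only [obs3, add_mul, mul_add, Matrix.trace_add, ← Matrix.mul_kronecker_mul,
      Matrix.trace_kronecker, Matrix.one_mul, Matrix.mul_one, t1, t2, t3,
      mul_one, one_mul, rA, rB, rC]
    push_cast; ring
  rw [variance, variance, variance, variance, mean, hM1, hM2, ← ha, ← hb, ← hc]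
  simp only [Complex.add_re, Complex.ofReal_re, Complex.mul_re, Complex.ofReal_im,
    Complex.re_ofNat, Complex.im_ofNat]
  ring

lemma variance_mix {d : Type*} [Fintype d] (M : Matrix d d ℂ)
    {N : ℕ} (p : Fin N → ℝ) (σ : Fin N → Matrix d d ℂ)
    (hp : ∀ k, 0 ≤ p k) (hpsum : ∑ k, p k = 1) :
    ∑ k, p k * variance M (σ k) ≤ variance M (∑ k, (p k : ℂ) • σ k) := by
  have hlin : ∀ X : Matrix d d ℂ, (Matrix.trace (X * ∑ k, (p k : ℂ) • σ k)).re
      = ∑ k, p k * (Matrix.trace (X * σ k)).re := by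
    intro X
    rw [Finset.mul_sum, Matrix.trace_sum, Complex.re_sum]
    refine Finset.sum_congr rfl fun k _ => ?_
    rw [Matrix.mul_smul, Matrix.trace_smul, smul_eq_mul, Complex.mul_re]
    simp
  set s : Fin N → ℝ := fun k => (Matrix.trace (M * M * σ k)).re with hs
  set m : Fin N → ℝ := fun k => mean M (σ k) with hm
  have h2 : (Matrix.trace (M * M * ∑ k, (p k : ℂ) • σ k)).re = ∑ k, p k * s k := by
    exact hlin (M * M)
  have h1 : mean M (∑ k, (p k : ℂ) • σ k) = ∑ k, p k * m k := hlin M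
  have hCS : (∑ k, p k * m k) ^ 2 ≤ ∑ k, p k * (m k) ^ 2 := by
    have key := Finset.sum_mul_sq_le_sq_mul_sq Finset.univ
      (fun k => Real.sqrt (p k)) (fun k => Real.sqrt (p k) * m k)
    have e1 : ∀ k : Fin N, Real.sqrt (p k) * (Real.sqrt (p k) * m k) = p k * m k := by
      intro k; rw [← mul_assoc, Real.mul_self_sqrt (hp k)]
    have e2 : ∀ k : Fin N, Real.sqrt (p k) ^ 2 = p k := fun k => Real.sq_sqrt (hp k)
    have e3 : ∀ k : Fin N, (Real.sqrt (p k) * m k) ^ 2 = p k * m k ^ 2 := by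
      intro k; rw [mul_pow, e2]
    simp only [e1, e2, e3, hpsum, one_mul] at key
    exact key
  rw [variance, h2, h1]
  have : ∑ k, p k * variance M (σ k) = ∑ k, p k * s k - ∑ k, p k * m k ^ 2 := by
    rw [← Finset.sum_sub_distrib]
    refine Finset.sum_congr rfl fun k _ => ?_
    rw [variance, hs, hm]; ring
  rw [this]
  linarith [hCS]

/-- entanglement criterion for fully separable tripartite states with three
composite measurements. -/
theorem fully_separable_three_measurements
    (a0 b0 c0 : Fin 3 → ℝ) (a b c : Fin 3 → E3)
    (hlia : LinearIndependent ℝ ![a 0, a 1, a 2])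
    (hlib : LinearIndependent ℝ ![b 0, b 1, b 2])
    (hlic : LinearIndependent ℝ ![c 0, c 1, c 2])
    (ρ : Matrix ((Fin 2 × Fin 2) × Fin 2) ((Fin 2 × Fin 2) × Fin 2) ℂ)
    (N : ℕ) (p : Fin N → ℝ)
    (ρA ρB ρC : Fin N → Matrix (Fin 2) (Fin 2) ℂ)
    (hp : ∀ k, 0 ≤ p k) (hpsum : ∑ k, p k = 1)
    (hA : ∀ k, IsDensityMatrix (ρA k)) (hB : ∀ k, IsDensityMatrix (ρB k))
    (hC : ∀ k, IsDensityMatrix (ρC k))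
    (hsep : ρ = ∑ k, (p k : ℂ) • (ρA k ⊗ₖ ρB k ⊗ₖ ρC k)) :
    ∑ i : Fin 3, variance (obs3 (qObs (a0 i) (a i)) (qObs (b0 i) (b i)) (qObs (c0 i) (c i))) ρ
      ≥ ((gram a).trace - lamMax a) + ((gram b).trace - lamMax b)
        + ((gram c).trace - lamMax c) := by
  set Bnd := ((gram a).trace - lamMax a) + ((gram b).trace - lamMax b)
    + ((gram c).trace - lamMax c) with hBnd
  set M : Fin 3 → Matrix ((Fin 2 × Fin 2) × Fin 2) ((Fin 2 × Fin 2) × Fin 2) ℂ :=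
    fun i => obs3 (qObs (a0 i) (a i)) (qObs (b0 i) (b i)) (qObs (c0 i) (c i)) with hM
  have step1 : ∀ i, ∑ k, p k * variance (M i) (ρA k ⊗ₖ ρB k ⊗ₖ ρC k)
      ≤ variance (M i) ρ := by
    intro i
    rw [hsep]
    exact variance_mix (M i) p _ hp hpsum
  have step2 : ∀ i k, variance (M i) (ρA k ⊗ₖ ρB k ⊗ₖ ρC k)
      = variance (qObs (a0 i) (a i)) (ρA k) + variance (qObs (b0 i) (b i)) (ρB k)
        + variance (qObs (c0 i) (c i)) (ρC k) :=
    fun i k => variance_obs3 _ _ _ _ _ _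
      (qObs_isHermitian _ _) (qObs_isHermitian _ _) (qObs_isHermitian _ _)
      (hA k).1.1 (hB k).1.1 (hC k).1.1 (hA k).2 (hB k).2 (hC k).2
  have step3 : ∀ k, Bnd ≤ ∑ i, variance (M i) (ρA k ⊗ₖ ρB k ⊗ₖ ρC k) := by
    intro k
    have hsum : ∑ i, variance (M i) (ρA k ⊗ₖ ρB k ⊗ₖ ρC k)
        = (∑ i, variance (qObs (a0 i) (a i)) (ρA k))
          + (∑ i, variance (qObs (b0 i) (b i)) (ρB k))
          + (∑ i, variance (qObs (c0 i) (c i)) (ρC k)) := by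
      rw [← Finset.sum_add_distrib, ← Finset.sum_add_distrib]
      exact Finset.sum_congr rfl fun i _ => step2 i k
    have ha' := qubit_three_var a0 a (ρA k) (hA k).1 (hA k).2
    have hb' := qubit_three_var b0 b (ρB k) (hB k).1 (hB k).2
    have hc' := qubit_three_var c0 c (ρC k) (hC k).1 (hC k).2
    rw [hsum, hBnd]
    linarith [ha', hb', hc']
  have chain : Bnd ≤ ∑ i : Fin 3, variance (M i) ρ := by
    calc Bnd = ∑ k, p k * Bnd := by rw [← Finset.sum_mul, hpsum, one_mul]
      _ ≤ ∑ k, p k * (∑ i, variance (M i) (ρA k ⊗ₖ ρB k ⊗ₖ ρC k)) := by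
          exact Finset.sum_le_sum fun k _ =>
            mul_le_mul_of_nonneg_left (step3 k) (hp k)
      _ = ∑ i : Fin 3, ∑ k, p k * variance (M i) (ρA k ⊗ₖ ρB k ⊗ₖ ρC k) := by
          rw [Finset.sum_comm]
          exact Finset.sum_congr rfl fun k _ => by rw [Finset.mul_sum]
      _ ≤ ∑ i : Fin 3, variance (M i) ρ :=
          Finset.sum_le_sum fun i _ => step1 i
  exact chain

end
end

section
/- For i = 1,2 let A_i, B_i, C_i be qubit observables with Bloch vectors a_i, b_i, c_i ∈ ℝ³, and assume each of the pairs {a₁,a₂}, {b₁,b₂}, {c₁,c₂} is linearly independent. Define the 8×8 Hermitian matrices M_i = A_i ⊗ I ⊗ I + I ⊗ B_i ⊗ I + I ⊗ I ⊗ C_i (Kronecker products, I the 2×2 identity). If ρ is a fully separable tripartite density matrix, i.e. ρ = Σ_k p_k · ρ_{k,A} ⊗ ρ_{k,B} ⊗ ρ_{k,C} is a finite convex combination (p_k ≥ 0, Σ_k p_k = 1) of Kronecker products of qubit density matrices, then (Δ_ρM₁)² + (Δ_ρM₂)² ≥ λ_min(T_{a₁,a₂}) + λ_min(T_{b₁,b₂})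 + λ_min(T_{c₁,c₂}). -/
open Matrix MeasureTheory Filter Set
open scoped RealInnerProductSpace Kronecker ComplexOrder

noncomputable section

/-! ### Auxiliary lemmas -/

lemma aux_trace_eq_sum_eigenvalues {n : Type*} [Fintype n] [DecidableEq n]
    {A : Matrix n n ℝ} (hA : A.IsHermitian) : A.trace = ∑ i, hA.eigenvalues i := by
  conv_lhs => rw [hA.spectral_theorem]
  rw [Unitary.conjStarAlgAut_apply, Matrix.trace_mul_cycle]
  have h1 : star (hA.eigenvectorUnitary : Matrix n n ℝ) * (hA.eigenvectorUnitary : Matrix n n ℝ)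
      = 1 := Unitary.star_mul_self_of_mem hA.eigenvectorUnitary.2
  rw [h1, Matrix.one_mul, Matrix.trace_diagonal]
  simp

lemma aux_det_eq_mul_eigenvalues {A : Matrix (Fin 2) (Fin 2) ℝ} (hA : A.IsHermitian) :
    A.det = hA.eigenvalues 0 * hA.eigenvalues 1 := by
  rw [hA.det_eq_prod_eigenvalues]
  simp [Fin.prod_univ_two]

lemma aux_real_key (al be ga w0 w1 e0 e1 : ℝ) (hal : 0 ≤ al) (hbe : 0 ≤ be)
    (hQ : (w0 ^ 2 + w1 ^ 2) ^ 2 ≤ al * w0 ^ 2 + 2 * ga * w0 * w1 + be * w1 ^ 2)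
    (htr : e0 + e1 = al + be) (hdet : e0 * e1 = al * be - ga ^ 2) :
    min e0 e1 ≤ (al - w0 ^ 2) + (be - w1 ^ 2) := by
  have hP0 : (0:ℝ) ≤ w0 ^ 2 + w1 ^ 2 := by positivity
  have hD0 : (0:ℝ) ≤ |e0 - e1| := abs_nonneg _
  have hDsq : |e0 - e1| ^ 2 = (al - be) ^ 2 + 4 * ga ^ 2 := by
    rw [sq_abs]; nlinarith [htr, hdet]
  have hcs2 : ((al - be) * (w0 ^ 2 - w1 ^ 2) + 4 * ga * (w0 * w1)) ^ 2
      ≤ (|e0 - e1| * (w0 ^ 2 + w1 ^ 2)) ^ 2 := by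
    rw [mul_pow, hDsq]
    nlinarith [sq_nonneg ((al - be) * (2 * w0 * w1) - 2 * ga * (w0 ^ 2 - w1 ^ 2))]
  have hcs : (al - be) * (w0 ^ 2 - w1 ^ 2) + 4 * ga * (w0 * w1)
      ≤ |e0 - e1| * (w0 ^ 2 + w1 ^ 2) := by
    nlinarith [hcs2, mul_nonneg hD0 hP0]
  have hQL : (w0 ^ 2 + w1 ^ 2) ^ 2 ≤ (al + be + |e0 - e1|) / 2 * (w0 ^ 2 + w1 ^ 2) := by
    nlinarith [hQ, hcs]
  have hPle : w0 ^ 2 + w1 ^ 2 ≤ (al + be + |e0 - e1|) / 2 := by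
    nlinarith [hQL, hP0, hal, hbe, hD0]
  rcases abs_cases (e0 - e1) with ⟨h1, _⟩ | ⟨h1, _⟩ <;> rw [h1] at hPle
  · have h2 : min e0 e1 ≤ e1 := min_le_right _ _
    linarith [hPle, htr, h2]
  · have h2 : min e0 e1 ≤ e0 := min_le_left _ _
    linarith [hPle, htr, h2]

lemma aux_pair_ge_lamMin (v : Fin 2 → E3) (r : E3) (hr : ⟪r, r⟫ ≤ 1) :
    lamMin v ≤ (⟪v 0, v 0⟫ - ⟪v 0, r⟫ ^ 2) + (⟪v 1, v 1⟫ - ⟪v 1, r⟫ ^ 2) := by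
  have hrr0 : (0:ℝ) ≤ ⟪r, r⟫ := real_inner_self_nonneg
  set e : Fin 2 → ℝ := (gram_isHermitian v).eigenvalues with he
  have hmin0 : lamMin v ≤ e 0 := ciInf_le (Set.Finite.bddBelow (Set.finite_range _)) 0
  have hmin1 : lamMin v ≤ e 1 := ciInf_le (Set.Finite.bddBelow (Set.finite_range _)) 1
  have hlam : lamMin v ≤ min (e 0) (e 1) := le_min hmin0 hmin1
  refine le_trans hlam ?_
  set s : E3 := ⟪v 0, r⟫ • v 0 + ⟪v 1, r⟫ • v 1 with hs
  have hsr : ⟪s, r⟫ = ⟪v 0, r⟫ ^ 2 + ⟪v 1, r⟫ ^ 2 := by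
    simp only [hs, inner_add_left, real_inner_smul_left]; ring
  have hss : ⟪s, s⟫ = ⟪v 0, v 0⟫ * ⟪v 0, r⟫ ^ 2
      + 2 * ⟪v 0, v 1⟫ * ⟪v 0, r⟫ * ⟪v 1, r⟫ + ⟪v 1, v 1⟫ * ⟪v 1, r⟫ ^ 2 := by
    simp only [hs, inner_add_left, inner_add_right, real_inner_smul_left, real_inner_smul_right]
    rw [real_inner_comm (v 1) (v 0)]; ring
  have hss0 : (0:ℝ) ≤ ⟪s, s⟫ := real_inner_self_nonneg
  have hQ : (⟪v 0, r⟫ ^ 2 + ⟪v 1, r⟫ ^ 2) ^ 2 ≤ ⟪v 0, v 0⟫ * ⟪v 0, r⟫ ^ 2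
      + 2 * ⟪v 0, v 1⟫ * ⟪v 0, r⟫ * ⟪v 1, r⟫ + ⟪v 1, v 1⟫ * ⟪v 1, r⟫ ^ 2 := by
    have h := real_inner_mul_inner_self_le s r
    rw [hsr] at h
    nlinarith [h]
  have htr : e 0 + e 1 = ⟪v 0, v 0⟫ + ⟪v 1, v 1⟫ := by
    have h := aux_trace_eq_sum_eigenvalues (gram_isHermitian v)
    rw [Fin.sum_univ_two] at h
    rw [he, ← h]
    simp [Matrix.trace, Matrix.diag, _root_.gram, Fin.sum_univ_two]
  have hdet : e 0 * e 1 = ⟪v 0, v 0⟫ * ⟪v 1, v 1⟫ - ⟪v 0, v 1⟫ ^ 2 := by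
    rw [he, ← aux_det_eq_mul_eigenvalues (gram_isHermitian v), Matrix.det_fin_two]
    simp only [_root_.gram, Matrix.of_apply]
    rw [real_inner_comm (v 1) (v 0)]; ring
  exact aux_real_key _ _ _ _ _ _ _ real_inner_self_nonneg real_inner_self_nonneg hQ htr hdet

lemma aux_trace_mul_real {n : Type*} [Fintype n] {M ρ : Matrix n n ℂ}
    (hM : M.IsHermitian) (hρ : ρ.IsHermitian) :
    Matrix.trace (M * ρ) = (((Matrix.trace (M * ρ)).re : ℝ) : ℂ) := by
  have h : (starRingEnd ℂ) (Matrix.trace (M * ρ)) = Matrix.trace (M * ρ) := by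
    have h2 : Matrix.trace ((M * ρ)ᴴ) = star (Matrix.trace (M * ρ)) :=
      Matrix.trace_conjTranspose _
    rw [Matrix.conjTranspose_mul, hM.eq, hρ.eq, Matrix.trace_mul_comm] at h2
    simpa using h2.symm
  exact (Complex.conj_eq_iff_re.mp h).symm

lemma aux_qubit_variance (a0 : ℝ) (a : E3) (ρ : Matrix (Fin 2) (Fin 2) ℂ)
    (h10 : ρ 1 0 = star (ρ 0 1)) (h00 : (ρ 0 0).im = 0) (h11 : (ρ 1 1).im = 0)
    (htr : (ρ 0 0).re + (ρ 1 1).re = 1) :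
    variance (qObs a0 a) ρ = ((a 0) ^ 2 + (a 1) ^ 2 + (a 2) ^ 2)
      - ((a 0) * (2 * (ρ 0 1).re) + (a 1) * (-2 * (ρ 0 1).im)
          + (a 2) * ((ρ 0 0).re - (ρ 1 1).re)) ^ 2 := by
  have hy : (ρ 1 1).re = 1 - (ρ 0 0).re := by linarith
  simp [variance, mean, qObs, pauli1, pauli2, pauli3, Matrix.trace, Matrix.diag,
    Matrix.mul_apply, Fin.sum_univ_two, Matrix.one_apply, h10, Complex.add_re,
    Complex.mul_re, Complex.mul_im, Complex.add_im, h00, h11, hy]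
  ring

lemma aux_bloch_sq_le_one (ρ : Matrix (Fin 2) (Fin 2) ℂ) (hρ : IsDensityMatrix ρ) :
    (2 * (ρ 0 1).re) ^ 2 + (-2 * (ρ 0 1).im) ^ 2 + ((ρ 0 0).re - (ρ 1 1).re) ^ 2 ≤ 1 := by
  have hherm := hρ.1.1
  have h10 : ρ 1 0 = star (ρ 0 1) := by
    have h := congrFun (congrFun hherm 1) 0
    simpa [Matrix.conjTranspose_apply] using h.symm
  have h00 : (ρ 0 0).im = 0 := by
    have h := congrFun (congrFun hherm 0) 0
    simp [Matrix.conjTranspose_apply, Complex.ext_iff] at h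
    linarith [h]
  have h11 : (ρ 1 1).im = 0 := by
    have h := congrFun (congrFun hherm 1) 1
    simp [Matrix.conjTranspose_apply, Complex.ext_iff] at h
    linarith [h]
  have htr : (ρ 0 0).re + (ρ 1 1).re = 1 := by
    have h := hρ.2
    simp [Matrix.trace, Matrix.diag, Fin.sum_univ_two, Complex.ext_iff] at h
    exact h.1
  have hdet : 0 ≤ (ρ.det).re := by
    rw [hherm.det_eq_prod_eigenvalues, Fin.prod_univ_two]
    have h := mul_nonneg (hρ.1.eigenvalues_nonneg 0) (hρ.1.eigenvalues_nonneg 1)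
    simpa [Complex.mul_re] using h
  rw [Matrix.det_fin_two, h10] at hdet
  simp [Complex.ext_iff, Complex.mul_re, h00, h11] at hdet
  nlinarith [hdet, htr]

lemma aux_qubit_pair (a0 : Fin 2 → ℝ) (a : Fin 2 → E3) (ρ : Matrix (Fin 2) (Fin 2) ℂ)
    (hρ : IsDensityMatrix ρ) :
    lamMin a ≤ variance (qObs (a0 0) (a 0)) ρ + variance (qObs (a0 1) (a 1)) ρ := by
  have hherm := hρ.1.1
  have h10 : ρ 1 0 = star (ρ 0 1) := by
    have h := congrFun (congrFun hherm 1) 0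
    simpa [Matrix.conjTranspose_apply] using h.symm
  have h00 : (ρ 0 0).im = 0 := by
    have h := congrFun (congrFun hherm 0) 0
    simp [Matrix.conjTranspose_apply, Complex.ext_iff] at h
    linarith [h]
  have h11 : (ρ 1 1).im = 0 := by
    have h := congrFun (congrFun hherm 1) 1
    simp [Matrix.conjTranspose_apply, Complex.ext_iff] at h
    linarith [h]
  have htr : (ρ 0 0).re + (ρ 1 1).re = 1 := by
    have h := hρ.2
    simp [Matrix.trace, Matrix.diag, Fin.sum_univ_two, Complex.ext_iff] at h
    exact h.1
  set rE : E3 := (WithLp.equiv 2 (Fin 3 → ℝ)).symm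
    ![2 * (ρ 0 1).re, -2 * (ρ 0 1).im, (ρ 0 0).re - (ρ 1 1).re] with hrE
  have hrEapp : ∀ k : Fin 3,
      rE k = ![2 * (ρ 0 1).re, -2 * (ρ 0 1).im, (ρ 0 0).re - (ρ 1 1).re] k := by
    intro k; rfl
  have hr : ⟪rE, rE⟫ ≤ (1:ℝ) := by
    have hb := aux_bloch_sq_le_one ρ hρ
    simp only [PiLp.inner_apply, RCLike.inner_apply, conj_trivial, Fin.sum_univ_three, hrEapp]
    simp only [Matrix.cons_val_zero, Matrix.cons_val_one, Matrix.head_cons, Matrix.cons_val_two, Matrix.tail_cons]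
    nlinarith [hb]
  have hinner : ∀ i : Fin 2, (⟪a i, a i⟫ : ℝ)
      = (a i 0) ^ 2 + (a i 1) ^ 2 + (a i 2) ^ 2 := by
    intro i
    simp only [PiLp.inner_apply, RCLike.inner_apply, conj_trivial, Fin.sum_univ_three]
    ring
  have hinnerr : ∀ i : Fin 2, (⟪a i, rE⟫ : ℝ)
      = (a i 0) * (2 * (ρ 0 1).re) + (a i 1) * (-2 * (ρ 0 1).im)
        + (a i 2) * ((ρ 0 0).re - (ρ 1 1).re) := by
    intro i
    simp only [PiLp.inner_apply, RCLike.inner_apply, conj_trivial, Fin.sum_univ_three, hrEapp]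
    simp only [Matrix.cons_val_zero, Matrix.cons_val_one, Matrix.head_cons, Matrix.cons_val_two, Matrix.tail_cons]
    ring
  have h := aux_pair_ge_lamMin a rE hr
  rw [hinner 0, hinner 1, hinnerr 0, hinnerr 1] at h
  rw [aux_qubit_variance (a0 0) (a 0) ρ h10 h00 h11 htr,
    aux_qubit_variance (a0 1) (a 1) ρ h10 h00 h11 htr]
  linarith [h]

lemma aux_variance_obs3 (A B C ρ1 ρ2 ρ3 : Matrix (Fin 2) (Fin 2) ℂ)
    (hA : A.IsHermitian) (hB : B.IsHermitian) (hC : C.IsHermitian)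
    (hρ1 : IsDensityMatrix ρ1) (hρ2 : IsDensityMatrix ρ2) (hρ3 : IsDensityMatrix ρ3) :
    variance (obs3 A B C) (ρ1 ⊗ₖ ρ2 ⊗ₖ ρ3)
      = variance A ρ1 + variance B ρ2 + variance C ρ3 := by
  have hra := aux_trace_mul_real hA hρ1.1.1
  have hrb := aux_trace_mul_real hB hρ2.1.1
  have hrc := aux_trace_mul_real hC hρ3.1.1
  have e1 : Matrix.trace (obs3 A B C * (ρ1 ⊗ₖ ρ2 ⊗ₖ ρ3))
      = Matrix.trace (A * ρ1) + Matrix.trace (B * ρ2) + Matrix.trace (C * ρ3) := by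
    simp only [obs3, Matrix.add_mul, ← Matrix.mul_kronecker_mul, Matrix.trace_add,
      Matrix.trace_kronecker, Matrix.one_mul, Matrix.mul_one, hρ1.2, hρ2.2, hρ3.2,
      Matrix.trace_one]
    ring
  have e2 : Matrix.trace (obs3 A B C * obs3 A B C * (ρ1 ⊗ₖ ρ2 ⊗ₖ ρ3))
      = Matrix.trace (A * A * ρ1) + Matrix.trace (B * B * ρ2) + Matrix.trace (C * C * ρ3)
        + 2 * (Matrix.trace (A * ρ1) * Matrix.trace (B * ρ2))
        + 2 * (Matrix.trace (A * ρ1) * Matrix.trace (C * ρ3))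
        + 2 * (Matrix.trace (B * ρ2) * Matrix.trace (C * ρ3)) := by
    simp only [obs3, Matrix.add_mul, Matrix.mul_add, ← Matrix.mul_kronecker_mul,
      Matrix.trace_add, Matrix.trace_kronecker, Matrix.one_mul, Matrix.mul_one,
      hρ1.2, hρ2.2, hρ3.2, Matrix.trace_one]
    ring
  unfold variance mean
  rw [e1, e2, hra, hrb, hrc]
  simp only [Complex.add_re, Complex.mul_re, Complex.ofReal_re, Complex.ofReal_im,
    Complex.re_ofNat, Complex.im_ofNat]
  ring

lemma aux_variance_mixture {n : Type*} [Fintype n] (M : Matrix n n ℂ) {N : ℕ}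
    (p : Fin N → ℝ) (σ : Fin N → Matrix n n ℂ) (hp : ∀ k, 0 ≤ p k)
    (hpsum : ∑ k, p k = 1) :
    ∑ k, p k * variance M (σ k) ≤ variance M (∑ k, (p k : ℂ) • σ k) := by
  have key : ∀ (X : Matrix n n ℂ), (Matrix.trace (X * ∑ k, (p k : ℂ) • σ k)).re
      = ∑ k, p k * (Matrix.trace (X * σ k)).re := by
    intro X
    rw [Finset.mul_sum, Matrix.trace_sum, Complex.re_sum]
    refine Finset.sum_congr rfl fun k _ => ?_
    rw [Matrix.mul_smul, Matrix.trace_smul, smul_eq_mul, Complex.re_ofReal_mul]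
  have hjensen : (∑ k, p k * (Matrix.trace (M * σ k)).re) ^ 2
      ≤ ∑ k, p k * ((Matrix.trace (M * σ k)).re) ^ 2 := by
    have h := Finset.sum_mul_sq_le_sq_mul_sq Finset.univ
      (fun k => Real.sqrt (p k)) (fun k => Real.sqrt (p k) * (Matrix.trace (M * σ k)).re)
    have h1 : ∀ k, Real.sqrt (p k) * (Real.sqrt (p k) * (Matrix.trace (M * σ k)).re)
        = p k * (Matrix.trace (M * σ k)).re := by
      intro k; rw [← mul_assoc, Real.mul_self_sqrt (hp k)]
    have h2 : ∀ k, Real.sqrt (p k) ^ 2 = p k := fun k => Real.sq_sqrt (hp k)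
    have h3 : ∀ k, (Real.sqrt (p k) * (Matrix.trace (M * σ k)).re) ^ 2
        = p k * ((Matrix.trace (M * σ k)).re) ^ 2 := by
      intro k; rw [mul_pow, h2 k]
    simp only [h1, h3, h2] at h
    rwa [hpsum, one_mul] at h
  unfold variance mean
  rw [key (M * M), key M]
  have hs : ∑ k, p k * ((Matrix.trace (M * M * σ k)).re - (Matrix.trace (M * σ k)).re ^ 2)
      = ∑ k, p k * (Matrix.trace (M * M * σ k)).re
        - ∑ k, p k * ((Matrix.trace (M * σ k)).re) ^ 2 := by
    rw [← Finset.sum_sub_distrib]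
    refine Finset.sum_congr rfl fun k _ => ?_
    ring
  rw [hs]
  linarith [hjensen]

/-- entanglement criterion for fully separable tripartite states with two
composite measurements. -/
theorem fully_separable_two_measurements
    (a0 b0 c0 : Fin 2 → ℝ) (a b c : Fin 2 → E3)
    (hlia : LinearIndependent ℝ ![a 0, a 1])
    (hlib : LinearIndependent ℝ ![b 0, b 1])
    (hlic : LinearIndependent ℝ ![c 0, c 1])
    (ρ : Matrix ((Fin 2 × Fin 2) × Fin 2) ((Fin 2 × Fin 2) × Fin 2) ℂ)
    (N : ℕ) (p : Fin N → ℝ)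
    (ρA ρB ρC : Fin N → Matrix (Fin 2) (Fin 2) ℂ)
    (hp : ∀ k, 0 ≤ p k) (hpsum : ∑ k, p k = 1)
    (hA : ∀ k, IsDensityMatrix (ρA k)) (hB : ∀ k, IsDensityMatrix (ρB k))
    (hC : ∀ k, IsDensityMatrix (ρC k))
    (hsep : ρ = ∑ k, (p k : ℂ) • (ρA k ⊗ₖ ρB k ⊗ₖ ρC k)) :
    variance (obs3 (qObs (a0 0) (a 0)) (qObs (b0 0) (b 0)) (qObs (c0 0) (c 0))) ρ
        + variance (obs3 (qObs (a0 1) (a 1)) (qObs (b0 1) (b 1)) (qObs (c0 1) (c 1))) ρ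
      ≥ lamMin a + lamMin b + lamMin c := by
  subst hsep
  set M1 := obs3 (qObs (a0 0) (a 0)) (qObs (b0 0) (b 0)) (qObs (c0 0) (c 0)) with hM1
  set M2 := obs3 (qObs (a0 1) (a 1)) (qObs (b0 1) (b 1)) (qObs (c0 1) (c 1)) with hM2
  have h1 := aux_variance_mixture M1 p (fun k => ρA k ⊗ₖ ρB k ⊗ₖ ρC k) hp hpsum
  have h2 := aux_variance_mixture M2 p (fun k => ρA k ⊗ₖ ρB k ⊗ₖ ρC k) hp hpsum
  have hk : ∀ k : Fin N, lamMin a + lamMin b + lamMin c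
      ≤ variance M1 (ρA k ⊗ₖ ρB k ⊗ₖ ρC k) + variance M2 (ρA k ⊗ₖ ρB k ⊗ₖ ρC k) := by
    intro k
    rw [hM1, hM2,
      aux_variance_obs3 _ _ _ _ _ _ (qObs_isHermitian _ _) (qObs_isHermitian _ _)
        (qObs_isHermitian _ _) (hA k) (hB k) (hC k),
      aux_variance_obs3 _ _ _ _ _ _ (qObs_isHermitian _ _) (qObs_isHermitian _ _)
        (qObs_isHermitian _ _) (hA k) (hB k) (hC k)]
    have ha := aux_qubit_pair a0 a (ρA k) (hA k)
    have hb := aux_qubit_pair b0 b (ρB k) (hB k)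
    have hc := aux_qubit_pair c0 c (ρC k) (hC k)
    linarith [ha, hb, hc]
  have hsum : lamMin a + lamMin b + lamMin c
      ≤ ∑ k, p k * (variance M1 (ρA k ⊗ₖ ρB k ⊗ₖ ρC k)
          + variance M2 (ρA k ⊗ₖ ρB k ⊗ₖ ρC k)) := by
    calc lamMin a + lamMin b + lamMin c
        = ∑ k, p k * (lamMin a + lamMin b + lamMin c) := by
          rw [← Finset.sum_mul, hpsum, one_mul]
      _ ≤ _ := by
          refine Finset.sum_le_sum fun k _ => ?_
          exact mul_le_mul_of_nonneg_left (hk k) (hp k)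
  have hsplit : ∑ k, p k * (variance M1 (ρA k ⊗ₖ ρB k ⊗ₖ ρC k)
      + variance M2 (ρA k ⊗ₖ ρB k ⊗ₖ ρC k))
      = ∑ k, p k * variance M1 (ρA k ⊗ₖ ρB k ⊗ₖ ρC k)
        + ∑ k, p k * variance M2 (ρA k ⊗ₖ ρB k ⊗ₖ ρC k) := by
    rw [← Finset.sum_add_distrib]
    refine Finset.sum_congr rfl fun k _ => ?_
    ring
  rw [hsplit] at hsum
  exact le_trans hsum (add_le_add h1 h2)

end
end
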